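/- Let Ψ ∈ ℂ^{N×n} satisfy α‖w‖₂ ≤ ‖Ψw‖₂ ≤ β‖w‖₂ for all w ∈ ℂ^n (0 < α ≤ β), let the deviation model hold with parameter θ ≥ 0, and set A = (√N/√m) S Ψ ∈ ℂ^{m×n}. Then for every w ∈ ℂ^n, α²(1 − θ)‖w‖₂² ≤ E‖Aw‖₂² ≤ β²(1 + θ)‖w‖₂², where the expectation is over the random deviations Δ₁,…,Δ_m. -/

import Mathlib

open scoped BigOperators
open MeasureTheory Matrix

noncomputable section

/-- The complex exponential `e(x) = exp(2πix)`. -/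
def ce (x : ℝ) : ℂ := Complex.exp (2 * Real.pi * Complex.I * x)

/-- Half-bandwidth `Ñ = (N-1)/2`. -/
def Nt (N : ℕ) : ℤ := ((N : ℤ) - 1) / 2

/-- Uniform grid point `t_p = (p-1)/N - 1/2` (zero-based index). -/
def tg (N : ℕ) (p : Fin N) : ℝ := (p : ℝ) / N - 1 / 2

/-- Dirichlet interpolation matrix `S ∈ ℂ^{m×N}`. -/
def dirS (N m : ℕ) (tt : Fin m → ℝ) : Matrix (Fin m) (Fin N) ℂ :=
  fun k p => (N : ℂ)⁻¹ * ∑ u ∈ Finset.Icc (-(Nt N)) (Nt N), ce (u * (tg N p - tt k))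

/-- Centered DFT matrix `F ∈ ℂ^{N×N}`. -/
def dftF (N : ℕ) : Matrix (Fin N) (Fin N) ℂ :=
  fun p u => ((Real.sqrt N : ℂ))⁻¹ * ce (-(tg N p) * ((u : ℤ) - Nt N))

/-- DFT-incoherence parameter of `Ψ`. -/
def dftIncoh (N n : ℕ) (Ψ : Matrix (Fin N) (Fin n) ℂ) : ℝ :=
  ⨆ ℓ : Fin n, ∑ k : Fin N, ‖((dftF N)ᴴ * Ψ) k ℓ‖

/-- Euclidean norm on `ℂ^n`. -/
def norm2 {n : ℕ} (v : Fin n → ℂ) : ℝ := Real.sqrt (∑ i, ‖v i‖ ^ 2)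

/-- `ℓ₁` norm on `ℂ^n`. -/
def norm1 {n : ℕ} (v : Fin n → ℂ) : ℝ := ∑ i, ‖v i‖

/-- `v` has at most `s` nonzero entries. -/
def Sparse {n : ℕ} (s : ℕ) (v : Fin n → ℂ) : Prop :=
  (Finset.univ.filter fun i => v i ≠ 0).card ≤ s

/-- Error of the best `s`-sparse approximation of `g` in `ℓ₁`. -/
def sperr {n : ℕ} (s : ℕ) (g : Fin n → ℂ) : ℝ :=
  sInf {r : ℝ | ∃ h : Fin n → ℂ, Sparse s h ∧ r = norm1 (fun i => h i - g i)}

/-- The 1-periodic signal with Fourier coefficients `c`. -/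
def fcont (c : ℤ → ℂ) (x : ℝ) : ℂ := ∑' ℓ : ℤ, c ℓ * ce (ℓ * x)

/-- Tail `∑_{|ℓ|>Ñ} |c_ℓ|` of the Fourier coefficients. -/
def tailSum (N : ℕ) (c : ℤ → ℂ) : ℝ :=
  ∑' ℓ : ℤ, if Nt N < |ℓ| then ‖c ℓ‖ else 0

/-- The distribution `𝒟` satisfies the deviation model with parameter `θ`. -/
def DevModel (N m : ℕ) (𝒟 : Measure ℝ) (θ : ℝ) : Prop :=
  ∀ j : ℤ, j ≠ 0 → (|j| : ℝ) ≤ 2 * ((N : ℝ) - 1) / m →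
    (2 * N / m) * ‖∫ x, ce (((j * m : ℤ) : ℝ) * x) ∂𝒟‖ ≤ θ

/-- The random nonuniform sample points `t̃_k = (k-1)/m - 1/2 + Δ_k`. -/
def samplePts {Ω : Type*} (m : ℕ) (Δ : Fin m → Ω → ℝ) (ω : Ω) : Fin m → ℝ :=
  fun k => (k : ℝ) / m - 1 / 2 + Δ k ω

end

lemma ce_add (x y : ℝ) : ce (x + y) = ce x * ce y := by
  simp only [ce, ← Complex.exp_add, Complex.ofReal_add]; ring_nf

lemma ce_zero : ce 0 = 1 := by simp [ce]

lemma ce_int (n : ℤ) : ce n = 1 := by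
  rw [ce, show 2 * (Real.pi:ℂ) * Complex.I * (n:ℝ) = (n:ℤ) * (2 * Real.pi * Complex.I) by push_cast; ring,
    Complex.exp_int_mul_two_pi_mul_I]

lemma ce_abs (x : ℝ) : ‖ce x‖ = 1 := by
  rw [ce, Complex.norm_exp]
  have : (2 * (Real.pi:ℂ) * Complex.I * (x:ℝ)).re = 0 := by simp [Complex.mul_re]
  simp [this]

lemma ce_norm (x : ℝ) : ‖ce x‖ = 1 := ce_abs x

lemma ce_conj (x : ℝ) : (starRingEnd ℂ) (ce x) = ce (-x) := by
  rw [ce, ce, ← Complex.exp_conj]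
  have : (starRingEnd ℂ) (2 * (Real.pi:ℂ) * Complex.I * (x:ℝ)) = 2 * (Real.pi:ℂ) * Complex.I * ((-x:ℝ):ℂ) := by
    simp only [_root_.map_mul, Complex.conj_I, Complex.conj_ofReal, map_ofNat]
    push_cast
    ring
  rw [this]

lemma ce_pow (k : ℕ) (x : ℝ) : ce (k * x) = ce x ^ k := by
  induction k with
  | zero => simp [ce_zero]
  | succ k ih => rw [pow_succ, ← ih, ← ce_add]; congr 1; push_cast; ring

lemma ce_eq_one_iff (x : ℝ) : ce x = 1 ↔ ∃ n : ℤ, x = n := by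
  rw [ce, Complex.exp_eq_one_iff]
  constructor
  · rintro ⟨n, hn⟩
    refine ⟨n, ?_⟩
    have h2 : (2 * (Real.pi:ℂ) * Complex.I) ≠ 0 := by
      exact mul_ne_zero (mul_ne_zero two_ne_zero (Complex.ofReal_ne_zero.mpr Real.pi_ne_zero)) Complex.I_ne_zero
    have : (x:ℂ) = (n:ℂ) := by
      -- 2πI x = n * 2πI
      have : (x:ℂ) * (2 * Real.pi * Complex.I) = (n:ℂ) * (2 * Real.pi * Complex.I) := by
        linear_combination hn
      exact mul_right_cancel₀ h2 this
    exact_mod_cast this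
  · rintro ⟨n, rfl⟩
    exact ⟨n, by push_cast; ring⟩

lemma geom_ce (M : ℕ) (hM : 0 < M) (j : ℤ) :
    ∑ k ∈ Finset.range M, ce ((j : ℝ) * k / M) = if (M:ℤ) ∣ j then (M:ℂ) else 0 := by
  have hstep : ∀ k : ℕ, ce ((j:ℝ) * k / M) = ce ((j:ℝ)/M) ^ k := by
    intro k
    rw [← ce_pow]
    congr 1; push_cast; ring
  simp only [hstep]
  by_cases hd : (M:ℤ) ∣ j
  · obtain ⟨c, rfl⟩ := hd
    have : ce ((((M:ℤ)*c : ℤ):ℝ)/M) = 1 := by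
      have : (((M:ℤ)*c : ℤ):ℝ)/M = (c:ℝ) := by
        have hM' : (M:ℝ) ≠ 0 := by positivity
        push_cast
        field_simp
      rw [this]; exact_mod_cast ce_int c
    rw [if_pos ⟨c, rfl⟩]
    have h2 : ∀ k ∈ Finset.range M, ce ((((M:ℤ)*c:ℤ):ℝ)/M) ^ k = 1 := fun k _ => by rw [this, one_pow]
    rw [Finset.sum_congr rfl h2, Finset.sum_const, Finset.card_range]
    simp
  · have hz : ce ((j:ℝ)/M) ≠ 1 := by
      rw [Ne, ce_eq_one_iff]
      rintro ⟨n, hn⟩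
      apply hd
      refine ⟨n, ?_⟩
      have hM' : (M:ℝ) ≠ 0 := by positivity
      field_simp at hn
      have : (j:ℝ) = ((M:ℤ)*n : ℤ) := by push_cast; linarith [hn]
      exact_mod_cast this
    have hM1 : ce ((j:ℝ)/M) ^ M = 1 := by
      rw [← ce_pow]
      have : (M:ℝ) * ((j:ℝ)/M) = ((j:ℤ):ℝ) := by field_simp
      rw [this]; exact ce_int j
    rw [if_neg hd, geom_sum_eq hz, hM1]
    simp

lemma two_Nt (N : ℕ) (hN : Odd N) : 2 * Nt N = (N:ℤ) - 1 := by
  obtain ⟨t, ht⟩ := hN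
  simp only [Nt]
  omega

lemma orth (N : ℕ) (hN : Odd N) (hNpos : 0 < N) (j : ℤ) (hj : j.natAbs < N) :
    ∑ u ∈ Finset.Icc (-(Nt N)) (Nt N), ce ((u:ℝ) * ((j:ℝ)/N)) = if j = 0 then (N:ℂ) else 0 := by
  have hNt := two_Nt N hN
  have key : ∑ u ∈ Finset.Icc (-(Nt N)) (Nt N), ce ((u:ℝ) * ((j:ℝ)/N))
      = ∑ k ∈ Finset.range N, ce (((k:ℤ) - Nt N : ℤ) * ((j:ℝ)/N)) := by
    apply Finset.sum_bij' (fun (u : ℤ) (_ : u ∈ Finset.Icc (-(Nt N)) (Nt N)) => (u + Nt N).toNat)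
      (fun (k : ℕ) (_ : k ∈ Finset.range N) => (k:ℤ) - Nt N)
    · intro a ha
      simp only [Finset.mem_Icc] at ha
      simp only [Finset.mem_range]
      omega
    · intro b hb
      simp only [Finset.mem_range] at hb
      simp only [Finset.mem_Icc]
      omega
    · intro a ha
      simp only [Finset.mem_Icc] at ha
      omega
    · intro b hb
      simp only [Finset.mem_range] at hb
      omega
    · intro a ha
      simp only [Finset.mem_Icc] at ha
      congr 2
      push_cast [Int.toNat_of_nonneg (by omega : (0:ℤ) ≤ a + Nt N)]
      ring
  rw [key]
  have step : ∀ k ∈ Finset.range N, ce (((k:ℤ) - Nt N : ℤ) * ((j:ℝ)/N))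
      = ce (-((Nt N : ℤ):ℝ) * ((j:ℝ)/N)) * ce ((j:ℝ) * k / N) := by
    intro k _
    rw [← ce_add]
    congr 1
    push_cast
    ring
  rw [Finset.sum_congr rfl step, ← Finset.mul_sum, geom_ce N hNpos j]
  by_cases hj0 : j = 0
  · simp [hj0, ce_zero]
  · have hnd : ¬ (N:ℤ) ∣ j := by
      rintro ⟨c, rfl⟩
      rw [Int.natAbs_mul] at hj
      simp only [Int.natAbs_natCast] at hj
      rcases Nat.eq_zero_or_pos c.natAbs with h0 | h1
      · exact hj0 (by simp [Int.natAbs_eq_zero.mp h0])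
      · nlinarith
    simp [hnd, hj0]

lemma ksum (m : ℕ) (hm : 0 < m) (j : ℤ) :
    ∑ k : Fin m, ce ((j:ℝ) * (((k:ℕ):ℝ)/m - 1/2))
      = ce (-(j:ℝ)/2) * (if (m:ℤ) ∣ j then (m:ℂ) else 0) := by
  rw [Fin.sum_univ_eq_sum_range (fun k : ℕ => ce ((j:ℝ) * ((k:ℝ)/m - 1/2))) m]
  have step : ∀ k ∈ Finset.range m, ce ((j:ℝ) * ((k:ℝ)/m - 1/2))
      = ce (-(j:ℝ)/2) * ce ((j:ℝ) * k / m) := by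
    intro k _
    rw [← ce_add]
    congr 1
    ring
  rw [Finset.sum_congr rfl step, ← Finset.mul_sum, geom_ce m hm j]

lemma parseval (N : ℕ) (hN : Odd N) (hNpos : 0 < N) (g : Fin N → ℂ) :
    (N:ℝ) * ∑ u ∈ Finset.Icc (-(Nt N)) (Nt N),
        Complex.normSq ((N:ℂ)⁻¹ * ∑ p, g p * ce ((u:ℝ) * tg N p))
      = ∑ p, Complex.normSq (g p) := by
  have hNne : (N:ℂ) ≠ 0 := Nat.cast_ne_zero.mpr hNpos.ne'
  have cconj : (starRingEnd ℂ) ((N:ℂ)⁻¹) = (N:ℂ)⁻¹ := by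
    rw [map_inv₀, Complex.conj_natCast]
  have expand : ∀ u : ℤ, ((Complex.normSq ((N:ℂ)⁻¹ * ∑ p, g p * ce ((u:ℝ) * tg N p)) : ℝ) : ℂ)
      = ((N:ℂ)⁻¹)^2 * ∑ p : Fin N, ∑ q : Fin N,
          g p * (starRingEnd ℂ) (g q) * ce ((u:ℝ) * ((((p:ℤ) - (q:ℤ) : ℤ):ℝ) / N)) := by
    intro u
    rw [← Complex.mul_conj, _root_.map_mul, cconj, map_sum]
    have conjterm : ∀ q : Fin N, (starRingEnd ℂ) (g q * ce ((u:ℝ) * tg N q))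
        = (starRingEnd ℂ) (g q) * ce (-((u:ℝ) * tg N q)) := by
      intro q; rw [_root_.map_mul, ce_conj]
    rw [Finset.sum_congr rfl (fun q _ => conjterm q)]
    rw [mul_mul_mul_comm, ← pow_two, Finset.sum_mul_sum]
    congr 1
    refine Finset.sum_congr rfl fun p _ => Finset.sum_congr rfl fun q _ => ?_
    rw [mul_mul_mul_comm, ← ce_add]
    congr 1
    simp only [tg]
    push_cast
    ring
  have oeval : ∀ p q : Fin N, ∑ u ∈ Finset.Icc (-(Nt N)) (Nt N),
      ce ((u:ℝ) * ((((p:ℤ) - (q:ℤ) : ℤ):ℝ) / N)) = if p = q then (N:ℂ) else 0 := by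
    intro p q
    rw [orth N hN hNpos ((p:ℤ) - (q:ℤ)) (by omega)]
    congr 1
    simp only [sub_eq_zero, eq_iff_iff]
    constructor
    · intro h; exact Fin.ext (by exact_mod_cast h)
    · intro h; rw [h]
  have key : (∑ u ∈ Finset.Icc (-(Nt N)) (Nt N),
      ((Complex.normSq ((N:ℂ)⁻¹ * ∑ p, g p * ce ((u:ℝ) * tg N p)) : ℝ) : ℂ))
      = (N:ℂ)⁻¹ * ∑ p, ((Complex.normSq (g p) : ℝ) : ℂ) := by
    rw [Finset.sum_congr rfl (fun u _ => expand u)]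
    rw [← Finset.mul_sum, Finset.sum_comm]
    have swap2 : ∑ p : Fin N, ∑ u ∈ Finset.Icc (-(Nt N)) (Nt N), ∑ q : Fin N,
        g p * (starRingEnd ℂ) (g q) * ce ((u:ℝ) * ((((p:ℤ) - (q:ℤ) : ℤ):ℝ) / N))
        = ∑ p : Fin N, ∑ q : Fin N, g p * (starRingEnd ℂ) (g q) *
            ∑ u ∈ Finset.Icc (-(Nt N)) (Nt N), ce ((u:ℝ) * ((((p:ℤ) - (q:ℤ) : ℤ):ℝ) / N)) := by
      refine Finset.sum_congr rfl fun p _ => ?_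
      rw [Finset.sum_comm]
      exact Finset.sum_congr rfl fun q _ => (Finset.mul_sum _ _ _).symm
    rw [swap2]
    have inner : ∀ p : Fin N, ∑ q : Fin N, g p * (starRingEnd ℂ) (g q) *
        (∑ u ∈ Finset.Icc (-(Nt N)) (Nt N), ce ((u:ℝ) * ((((p:ℤ) - (q:ℤ) : ℤ):ℝ) / N)))
        = (N:ℂ) * ((Complex.normSq (g p) : ℝ) : ℂ) := by
      intro p
      rw [Finset.sum_congr rfl (fun q _ => by rw [oeval p q])]
      rw [Finset.sum_eq_single p]
      · rw [if_pos rfl, ← Complex.mul_conj]; ring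
      · intro q _ hq
        rw [if_neg (fun h => hq h.symm), mul_zero]
      · intro h; exact absurd (Finset.mem_univ p) h
    rw [Finset.sum_congr rfl (fun p _ => inner p), ← Finset.mul_sum]
    field_simp
  have : ((((N:ℝ) * ∑ u ∈ Finset.Icc (-(Nt N)) (Nt N),
      Complex.normSq ((N:ℂ)⁻¹ * ∑ p, g p * ce ((u:ℝ) * tg N p))) : ℝ) : ℂ)
      = ((∑ p, Complex.normSq (g p) : ℝ) : ℂ) := by
    push_cast
    rw [key]
    field_simp
  exact_mod_cast this

lemma norm2_sq {n : ℕ} (v : Fin n → ℂ) : norm2 v ^ 2 = ∑ i, Complex.normSq (v i) := by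
  rw [norm2, Real.sq_sqrt (Finset.sum_nonneg fun i _ => by positivity)]
  exact Finset.sum_congr rfl fun i _ => Complex.sq_norm (v i)

lemma ce_cont : Continuous ce := by
  exact (Complex.continuous_exp).comp (continuous_const.mul Complex.continuous_ofReal)

lemma integrable_ce (𝒟 : MeasureTheory.Measure ℝ) [MeasureTheory.IsProbabilityMeasure 𝒟] (a : ℝ) :
    MeasureTheory.Integrable (fun δ : ℝ => ce (a * δ)) 𝒟 := by
  have hc : Continuous fun δ : ℝ => ce (a * δ) := ce_cont.comp (continuous_const.mul continuous_id)
  exact (MeasureTheory.integrable_const (1:ℝ)).mono' hc.aestronglyMeasurable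
    (Filter.Eventually.of_forall fun x => by simp only [ce_abs]; norm_num)

lemma card_bound (N m : ℕ) (hN : Odd N) (hNpos : 0 < N) (hm : 0 < m) (u : ℤ)
    (hu : u ∈ Finset.Icc (-(Nt N)) (Nt N)) :
    ((((Finset.Icc (-(Nt N)) (Nt N)).erase u).filter (fun v => (m:ℤ) ∣ v - u)).card : ℤ) * m
      ≤ 2 * N := by
  have hNt := two_Nt N hN
  have hm' : (0:ℤ) < m := by exact_mod_cast hm
  set K : ℤ := ((N:ℤ) - 1) / m with hK
  have hK0 : 0 ≤ K := Int.ediv_nonneg (by omega) (by omega)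
  have hKm : K * m ≤ (N:ℤ) - 1 := Int.ediv_mul_le ((N:ℤ)-1) (by omega)
  have hcard : (((Finset.Icc (-(Nt N)) (Nt N)).erase u).filter (fun v => (m:ℤ) ∣ v - u)).card
      ≤ ((Finset.Icc (-K) K).erase 0).card := by
    apply Finset.card_le_card_of_injOn (fun v => (v - u) / m)
    · intro v hv
      simp only [Finset.mem_coe, Finset.mem_filter, Finset.mem_erase, Finset.mem_Icc] at hv ⊢
      obtain ⟨⟨hvu, hv1, hv2⟩, c, hc⟩ := hv
      simp only [Finset.mem_Icc] at hu
      have hdiv : (v - u) / m = c := by rw [hc, Int.mul_ediv_cancel_left _ (by omega)]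
      rw [hdiv]
      refine ⟨fun h0 => hvu (by subst h0; simp only [mul_zero] at hc; omega), ?_, ?_⟩
      · have h2 : -c * (m:ℤ) = u - v := by linear_combination hc
        have : -c ≤ K := by rw [hK, Int.le_ediv_iff_mul_le hm', h2]; omega
        omega
      · have h2 : c * (m:ℤ) = v - u := by linear_combination -hc
        rw [hK, Int.le_ediv_iff_mul_le hm', h2]
        omega
    · intro v hv v' hv' hvv
      simp only [Finset.mem_coe, Finset.mem_filter, Finset.mem_erase] at hv hv'
      obtain ⟨_, c, hc⟩ := hv
      obtain ⟨_, c', hc'⟩ := hv'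
      have h1 : (v - u)/(m:ℤ) = (v' - u)/(m:ℤ) := hvv
      rw [hc, hc', Int.mul_ediv_cancel_left _ (by omega : (m:ℤ) ≠ 0),
        Int.mul_ediv_cancel_left _ (by omega : (m:ℤ) ≠ 0)] at h1
      subst h1
      linarith [hc, hc']
  have hTcard : (((Finset.Icc (-K) K).erase 0).card : ℤ) = 2 * K := by
    rw [Finset.card_erase_of_mem (by simp [Finset.mem_Icc]; omega), Int.card_Icc]
    omega
  have := hcard
  have h2 : ((((Finset.Icc (-(Nt N)) (Nt N)).erase u).filter (fun v => (m:ℤ) ∣ v - u)).card : ℤ)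
      ≤ 2 * K := by rw [← hTcard]; exact_mod_cast hcard
  nlinarith [mul_le_mul_of_nonneg_right h2 (le_of_lt hm')]
lemma dirS_row (N : ℕ) (g : Fin N → ℂ) (t : ℝ) :
    ∑ p, ((N:ℂ)⁻¹ * ∑ u ∈ Finset.Icc (-(Nt N)) (Nt N), ce ((u:ℝ) * (tg N p - t))) * g p
      = ∑ u ∈ Finset.Icc (-(Nt N)) (Nt N),
          ((N:ℂ)⁻¹ * ∑ p, g p * ce ((u:ℝ) * tg N p)) * ce (-((u:ℝ) * t)) := by
  have h1 : ∀ p : Fin N,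
      ((N:ℂ)⁻¹ * ∑ u ∈ Finset.Icc (-(Nt N)) (Nt N), ce ((u:ℝ) * (tg N p - t))) * g p
      = ∑ u ∈ Finset.Icc (-(Nt N)) (Nt N),
          (N:ℂ)⁻¹ * (g p * ce ((u:ℝ) * tg N p)) * ce (-((u:ℝ) * t)) := by
    intro p
    rw [Finset.mul_sum, Finset.sum_mul]
    refine Finset.sum_congr rfl fun u _ => ?_
    have hc : ce ((u:ℝ) * (tg N p - t)) = ce ((u:ℝ) * tg N p) * ce (-((u:ℝ) * t)) := by
      rw [← ce_add]; congr 1; ring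
    rw [hc]; ring
  rw [Finset.sum_congr rfl fun p _ => h1 p, Finset.sum_comm]
  refine Finset.sum_congr rfl fun u _ => ?_
  rw [← Finset.sum_mul, ← Finset.mul_sum]

set_option maxHeartbeats 1000000 in
/-- expectation bounds `α²(1-θ)‖w‖₂² ≤ E‖Aw‖₂² ≤ β²(1+θ)‖w‖₂²` for
`A = (√N/√m) S Ψ` under the deviation model with parameter `θ`. -/
theorem expectation_frame_bounds
    (N n m : ℕ) (hN : Odd N) (hNpos : 0 < N) (hm : 0 < m) (hn : 0 < n)
    (Ψ : Matrix (Fin N) (Fin n) ℂ) (α β : ℝ) (hα : 0 < α) (hαβ : α ≤ β)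
    (hΨ : ∀ w : Fin n → ℂ, α * norm2 w ≤ norm2 (Ψ.mulVec w) ∧
      norm2 (Ψ.mulVec w) ≤ β * norm2 w)
    (Ωs : Type) (mΩ : MeasurableSpace Ωs) (μ : Measure Ωs) (hμ : IsProbabilityMeasure μ)
    (Δ : Fin m → Ωs → ℝ) (hmeas : ∀ k, Measurable (Δ k))
    (hindep : ProbabilityTheory.iIndepFun Δ μ)
    (𝒟 : Measure ℝ) (h𝒟 : IsProbabilityMeasure 𝒟)
    (hdist : ∀ k, Measure.map (Δ k) μ = 𝒟)
    (θ : ℝ) (hθ : 0 ≤ θ) (hdev : DevModel N m 𝒟 θ)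
    (w : Fin n → ℂ) :
    α ^ 2 * (1 - θ) * norm2 w ^ 2 ≤
      (∫ ω, norm2 ((((Real.sqrt N : ℂ) / (Real.sqrt m : ℂ)) •
        (dirS N m (samplePts m Δ ω) * Ψ)).mulVec w) ^ 2 ∂μ) ∧
    (∫ ω, norm2 ((((Real.sqrt N : ℂ) / (Real.sqrt m : ℂ)) •
        (dirS N m (samplePts m Δ ω) * Ψ)).mulVec w) ^ 2 ∂μ) ≤
      β ^ 2 * (1 + θ) * norm2 w ^ 2 := by
  classical
  have hNt := two_Nt N hN
  have hNR : (0:ℝ) < N := by exact_mod_cast hNpos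
  have hmR : (0:ℝ) < m := by exact_mod_cast hm
  set U : Finset ℤ := Finset.Icc (-(Nt N)) (Nt N) with hU
  set g : Fin N → ℂ := Ψ.mulVec w with hgdef
  set gh : ℤ → ℂ := fun u => (N:ℂ)⁻¹ * ∑ p, g p * ce ((u:ℝ) * tg N p) with hgh
  set Φ : ℤ → ℂ := fun d => ∫ x, ce ((d:ℝ) * x) ∂𝒟 with hΦ
  set bk : Fin m → ℝ := fun k => ((k:ℕ):ℝ)/m - 1/2 with hbk
  set F : Fin m → ℝ → ℂ := fun k δ => ∑ u ∈ U, gh u * ce (-((u:ℝ) * (bk k + δ))) with hF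
  set a : ℤ → ℝ := fun u => ‖gh u‖ with ha
  -- ℓ² mass of transform
  set S0 : ℝ := ∑ u ∈ U, Complex.normSq (gh u) with hS0
  set P : ℝ := ∑ p, Complex.normSq (g p) with hP
  have hparseval : (N:ℝ) * S0 = P := parseval N hN hNpos g
  have hPval : P = norm2 g ^ 2 := (norm2_sq g).symm
  -- step 1: pointwise formula
  have step1 : ∀ ω, norm2 ((((Real.sqrt N : ℂ) / (Real.sqrt m : ℂ)) •
        (dirS N m (samplePts m Δ ω) * Ψ)).mulVec w) ^ 2
      = ((N:ℝ)/m) * ∑ k, Complex.normSq (F k (Δ k ω)) := by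
    intro ω
    rw [norm2_sq, Finset.mul_sum]
    refine Finset.sum_congr rfl fun k _ => ?_
    have hmv : ((((Real.sqrt N : ℂ) / (Real.sqrt m : ℂ)) •
        (dirS N m (samplePts m Δ ω) * Ψ)).mulVec w) k
        = ((Real.sqrt N : ℂ) / (Real.sqrt m : ℂ)) * F k (Δ k ω) := by
      rw [Matrix.smul_mulVec, ← Matrix.mulVec_mulVec, Pi.smul_apply, smul_eq_mul]
      congr 1
      have : (dirS N m (samplePts m Δ ω)).mulVec g k
          = ∑ p, ((N:ℂ)⁻¹ * ∑ u ∈ U, ce ((u:ℝ) * (tg N p - samplePts m Δ ω k))) * g p := by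
        simp [Matrix.mulVec, dotProduct, dirS, hU]
      rw [this, dirS_row N g (samplePts m Δ ω k)]
      refine Finset.sum_congr rfl fun u _ => ?_
      have harg : samplePts m Δ ω k = bk k + Δ k ω := by
        simp [samplePts, hbk]
      rw [harg]
    rw [hmv, _root_.map_mul]
    congr 1
    have : ((Real.sqrt N : ℂ) / (Real.sqrt m : ℂ)) = ((Real.sqrt N / Real.sqrt m : ℝ) : ℂ) := by
      norm_cast
    rw [this, Complex.normSq_ofReal, div_mul_div_comm,
      Real.mul_self_sqrt hNR.le, Real.mul_self_sqrt hmR.le]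
  -- continuity and integrability
  have hcontF : ∀ k, Continuous fun δ => F k δ := by
    intro k
    refine continuous_finset_sum _ fun u _ => continuous_const.mul ?_
    exact ce_cont.comp ((continuous_const.mul (continuous_const.add continuous_id)).neg)
  have hcontH : ∀ k, Continuous fun δ => Complex.normSq (F k δ) :=
    fun k => Complex.continuous_normSq.comp (hcontF k)
  have hbound : ∀ k δ, Complex.normSq (F k δ) ≤ (∑ u ∈ U, a u) ^ 2 := by
    intro k δ
    have habs : ‖F k δ‖ ≤ ∑ u ∈ U, a u := by
      refine le_trans (norm_sum_le _ _) (Finset.sum_le_sum fun u _ => ?_)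
      rw [norm_mul, ce_abs, mul_one]
    rw [← Complex.sq_norm]
    exact pow_le_pow_left₀ (norm_nonneg _) habs 2
  have hint : ∀ k, Integrable (fun ω => Complex.normSq (F k (Δ k ω))) μ := by
    intro k
    refine (integrable_const ((∑ u ∈ U, a u) ^ 2)).mono'
      (((hcontH k).measurable.comp (hmeas k)).aestronglyMeasurable)
      (Filter.Eventually.of_forall fun ω => ?_)
    rw [Real.norm_eq_abs, abs_of_nonneg (Complex.normSq_nonneg _)]
    exact hbound k _
  -- step 2: expectation swaps
  have step2 : (∫ ω, norm2 ((((Real.sqrt N : ℂ) / (Real.sqrt m : ℂ)) •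
        (dirS N m (samplePts m Δ ω) * Ψ)).mulVec w) ^ 2 ∂μ)
      = ((N:ℝ)/m) * ∑ k, ∫ δ, Complex.normSq (F k δ) ∂𝒟 := by
    rw [integral_congr_ae (Filter.Eventually.of_forall step1), integral_const_mul,
      integral_finset_sum _ (fun k _ => hint k)]
    congr 1
    refine Finset.sum_congr rfl fun k _ => ?_
    rw [← hdist k, integral_map (hmeas k).aemeasurable (hcontH k).aestronglyMeasurable]
  -- step 3: compute each expectation
  set I : Fin m → ℂ := fun k => ∑ u ∈ U, ∑ v ∈ U,
      gh u * (starRingEnd ℂ) (gh v) * Φ (v - u) * ce (((v - u : ℤ):ℝ) * bk k) with hI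
  have step3 : ∀ k, ∫ δ, Complex.normSq (F k δ) ∂𝒟 = (I k).re := by
    intro k
    set G : ℝ → ℂ := fun δ => ∑ u ∈ U, ∑ v ∈ U,
      (gh u * (starRingEnd ℂ) (gh v) * ce (((v - u : ℤ):ℝ) * bk k)) * ce (((v - u : ℤ):ℝ) * δ)
      with hG
    have hexp : ∀ δ, ((Complex.normSq (F k δ) : ℝ) : ℂ) = G δ := by
      intro δ
      rw [← Complex.mul_conj, hF, hG]
      simp only
      rw [map_sum, Finset.sum_mul_sum]
      refine Finset.sum_congr rfl fun u _ => Finset.sum_congr rfl fun v _ => ?_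
      rw [_root_.map_mul, ce_conj, neg_neg]
      have hce : ce (-((u:ℝ) * (bk k + δ))) * ce ((v:ℝ) * (bk k + δ))
          = ce (((v - u : ℤ):ℝ) * bk k) * ce (((v - u : ℤ):ℝ) * δ) := by
        rw [← ce_add, ← ce_add]
        congr 1
        push_cast
        ring
      calc gh u * ce (-((u:ℝ) * (bk k + δ))) * ((starRingEnd ℂ) (gh v) * ce ((v:ℝ) * (bk k + δ)))
          = gh u * (starRingEnd ℂ) (gh v) *
            (ce (-((u:ℝ) * (bk k + δ))) * ce ((v:ℝ) * (bk k + δ))) := by ring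
        _ = _ := by rw [hce]; ring
    have hGint : Integrable G 𝒟 := by
      refine integrable_finset_sum _ fun u _ => integrable_finset_sum _ fun v _ => ?_
      exact (integrable_ce 𝒟 _).const_mul _
    have h2 : ∀ δ, Complex.normSq (F k δ) = (G δ).re := by
      intro δ
      rw [← hexp δ, Complex.ofReal_re]
    rw [integral_congr_ae (Filter.Eventually.of_forall h2)]
    have h3 : ∫ δ, (G δ).re ∂𝒟 = (∫ δ, G δ ∂𝒟).re := by
      have := Complex.reCLM.integral_comp_comm hGint
      simpa using this
    rw [h3]
    congr 1
    rw [hG, hI]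
    simp only
    rw [integral_finset_sum _ (fun u _ => integrable_finset_sum _ fun v _ =>
      (integrable_ce 𝒟 _).const_mul _)]
    refine Finset.sum_congr rfl fun u _ => ?_
    rw [integral_finset_sum _ (fun v _ => (integrable_ce 𝒟 _).const_mul _)]
    refine Finset.sum_congr rfl fun v _ => ?_
    rw [integral_const_mul]
    rw [hΦ]
    simp only
    push_cast
    ring
  -- step 4: sum over k
  set f : ℤ → ℤ → ℂ := fun u v => gh u * (starRingEnd ℂ) (gh v) * Φ (v - u) *
      (ce (-((v - u : ℤ):ℝ)/2) * (if (m:ℤ) ∣ v - u then (m:ℂ) else 0)) with hf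
  have step4 : ∑ k : Fin m, I k = ∑ u ∈ U, ∑ v ∈ U, f u v := by
    rw [Finset.sum_comm]
    refine Finset.sum_congr rfl fun u _ => ?_
    rw [Finset.sum_comm]
    refine Finset.sum_congr rfl fun v _ => ?_
    have h1 : ∀ k : Fin m, gh u * (starRingEnd ℂ) (gh v) * Φ (v - u) * ce (((v - u : ℤ):ℝ) * bk k)
        = (gh u * (starRingEnd ℂ) (gh v) * Φ (v - u)) * ce (((v - u : ℤ):ℝ) * bk k) := by
      intro k; ring
    rw [Finset.sum_congr rfl fun k _ => h1 k, ← Finset.mul_sum]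
    have h2 : ∑ k : Fin m, ce (((v - u : ℤ):ℝ) * bk k)
        = ce (-((v - u : ℤ):ℝ)/2) * (if (m:ℤ) ∣ (v - u) then (m:ℂ) else 0) := by
      have := ksum m hm (v - u)
      rw [← this]
    rw [h2, hf]
  -- diagonal value
  have hΦ0 : Φ 0 = 1 := by
    rw [hΦ]
    simp only [Int.cast_zero, zero_mul, ce_zero]
    simp [measure_univ]
  have hdiag : ∀ u ∈ U, f u u = (m:ℂ) * ((Complex.normSq (gh u) : ℝ) : ℂ) := by
    intro u _
    rw [hf]
    simp only [sub_self, hΦ0, if_pos (dvd_zero (m:ℤ)), Int.cast_zero]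
    rw [Complex.mul_conj]
    norm_num [ce_zero]
    ring
  set C : ℂ := ∑ u ∈ U, ∑ v ∈ U.erase u, f u v with hC
  have hsplitsum : ∑ u ∈ U, ∑ v ∈ U, f u v = (((m:ℝ) * S0 : ℝ) : ℂ) + C := by
    have h1 : ∀ u ∈ U, ∑ v ∈ U, f u v = f u u + ∑ v ∈ U.erase u, f u v :=
      fun u hu => (Finset.add_sum_erase U (f u) hu).symm
    rw [Finset.sum_congr rfl h1, Finset.sum_add_distrib, hC]
    congr 1
    rw [Finset.sum_congr rfl hdiag, ← Finset.mul_sum, hS0]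
    push_cast
    ring
  -- value of the expectation
  have Eval : (∫ ω, norm2 ((((Real.sqrt N : ℂ) / (Real.sqrt m : ℂ)) •
        (dirS N m (samplePts m Δ ω) * Ψ)).mulVec w) ^ 2 ∂μ)
      = P + ((N:ℝ)/m) * C.re := by
    rw [step2, Finset.sum_congr rfl (fun k _ => step3 k)]
    have h1 : ∑ k : Fin m, (I k).re = (∑ k : Fin m, I k).re := by
      rw [Complex.re_sum]
    rw [h1, step4, hsplitsum, Complex.add_re, Complex.ofReal_re]
    rw [← hparseval]
    field_simp
  -- bound on characteristic function
  have hΦb : ∀ d : ℤ, d ≠ 0 → (m:ℤ) ∣ d → |d| ≤ (N:ℤ) - 1 →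
      ‖Φ d‖ ≤ θ * m / (2*N) := by
    rintro d hd0 ⟨j, rfl⟩ hdle
    have hj0 : j ≠ 0 := by rintro rfl; simp at hd0
    have hjle : (|j| : ℝ) ≤ 2*((N:ℝ)-1)/m := by
      have h1 : |j| * (m:ℤ) ≤ (N:ℤ) - 1 := by
        have habs : |(m:ℤ) * j| = |j| * (m:ℤ) := by
          rw [abs_mul, abs_of_nonneg (by positivity : (0:ℤ) ≤ (m:ℤ)), mul_comm]
        rw [habs] at hdle
        exact hdle
      have h1R : (|j| : ℝ) * m ≤ (N:ℝ) - 1 := by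
        have := h1
        push_cast at this ⊢
        exact_mod_cast this
      rw [le_div_iff₀ hmR]
      have hN1 : (1:ℝ) ≤ N := by exact_mod_cast hNpos
      push_cast at h1R ⊢
      nlinarith [h1R, hN1]
    have hdev' := hdev j hj0 hjle
    have harg : ((((m:ℤ)*j : ℤ)):ℝ) = (((j * m : ℤ)):ℝ) := by push_cast; ring
    have hcast : Φ ((m:ℤ)*j) = ∫ x, ce (((j * m : ℤ):ℝ) * x) ∂𝒟 := by
      rw [hΦ]
      simp only [harg]
    rw [hcast]
    rw [le_div_iff₀ (by positivity : (0:ℝ) < 2*N)]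
    have h4 : (2*(N:ℝ)/m) * ‖∫ x, ce (((j * m : ℤ):ℝ) * x) ∂𝒟‖ * m
        = ‖∫ x, ce (((j * m : ℤ):ℝ) * x) ∂𝒟‖ * (2*N) := by
      field_simp
    nlinarith [mul_le_mul_of_nonneg_right hdev' hmR.le, h4]
  -- pointwise bound on off-diagonal terms
  set V : ℤ → Finset ℤ := fun u => (U.erase u).filter (fun v => (m:ℤ) ∣ v - u) with hV
  clear_value gh
  have habsf : ∀ u ∈ U, ∀ v ∈ U.erase u,
      ‖f u v‖ ≤ (if (m:ℤ) ∣ v - u then (θ*m/(2*N)) * m * (a u * a v) else 0) := by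
    intro u hu v hv
    by_cases hdvd : (m:ℤ) ∣ v - u
    · rw [if_pos hdvd]
      simp only [hf, if_pos hdvd]
      rw [norm_mul, norm_mul, norm_mul, norm_mul, ce_abs,
        Complex.norm_conj, one_mul]
      have hd0 : v - u ≠ 0 := sub_ne_zero.mpr (Finset.ne_of_mem_erase hv)
      have hdle : |v - u| ≤ (N:ℤ) - 1 := by
        have hvU := Finset.mem_of_mem_erase hv
        simp only [hU, Finset.mem_Icc] at hu hvU
        rw [abs_le]
        omega
      have hΦle := hΦb (v-u) hd0 hdvd hdle
      have habm : ‖((m:ℂ))‖ = (m:ℝ) := by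
        rw [Complex.norm_natCast]
      rw [habm]
      have h0 : (0:ℝ) ≤ a u * a v := mul_nonneg (norm_nonneg _) (norm_nonneg _)
      calc ‖gh u‖ * ‖gh v‖ * ‖Φ (v - u)‖ * (m:ℝ)
          ≤ ‖gh u‖ * ‖gh v‖ * (θ*m/(2*N)) * (m:ℝ) := by
            gcongr
        _ = (θ*m/(2*N)) * m * (a u * a v) := by rw [ha]; ring
    · rw [if_neg hdvd]
      simp [hf, hdvd]
  -- crude ℓ¹ bound for the off-diagonal part
  have hsq : ∀ u, a u ^ 2 = Complex.normSq (gh u) := fun u => Complex.sq_norm (gh u)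
  have hcardV : ∀ u ∈ U, ((V u).card : ℝ) ≤ 2*N/m := by
    intro u hu
    rw [le_div_iff₀ hmR]
    exact_mod_cast card_bound N m hN hNpos hm u hu
  have hswap : ∑ u ∈ U, ∑ v ∈ V u, a v ^ 2 = ∑ v ∈ U, ∑ u ∈ V v, a v ^ 2 := by
    apply Finset.sum_comm'
    intro x y
    simp only [hV, Finset.mem_filter, Finset.mem_erase]
    constructor
    · rintro ⟨hx, ⟨hyx, hy⟩, hd⟩
      exact ⟨⟨⟨fun h => hyx h.symm, hx⟩, dvd_sub_comm.mp hd⟩, hy⟩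
    · rintro ⟨⟨⟨hxy, hx⟩, hd⟩, hy⟩
      exact ⟨hx, ⟨fun h => hxy h.symm, hy⟩, dvd_sub_comm.mp hd⟩
  have hT : ∑ u ∈ U, ∑ v ∈ V u, a u * a v ≤ (2*(N:ℝ)/m) * S0 := by
    have h1 : ∑ u ∈ U, ∑ v ∈ V u, a u * a v
        ≤ ∑ u ∈ U, ∑ v ∈ V u, (a u ^ 2 + a v ^ 2) / 2 := by
      refine Finset.sum_le_sum fun u _ => Finset.sum_le_sum fun v _ => ?_
      nlinarith [sq_nonneg (a u - a v)]
    have h2 : ∑ u ∈ U, ∑ v ∈ V u, (a u ^ 2 + a v ^ 2) / 2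
        = (1/2) * (∑ u ∈ U, ∑ v ∈ V u, a u ^ 2) + (1/2) * (∑ u ∈ U, ∑ v ∈ V u, a v ^ 2) := by
      rw [Finset.mul_sum, Finset.mul_sum, ← Finset.sum_add_distrib]
      refine Finset.sum_congr rfl fun u _ => ?_
      rw [Finset.mul_sum, Finset.mul_sum, ← Finset.sum_add_distrib]
      refine Finset.sum_congr rfl fun v _ => ?_
      ring
    have h3 : ∑ u ∈ U, ∑ v ∈ V u, a u ^ 2 ≤ (2*(N:ℝ)/m) * S0 := by
      have : ∀ u ∈ U, ∑ v ∈ V u, a u ^ 2 = ((V u).card : ℝ) * a u ^ 2 := by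
        intro u _
        rw [Finset.sum_const, nsmul_eq_mul]
      rw [Finset.sum_congr rfl this]
      calc ∑ u ∈ U, ((V u).card : ℝ) * a u ^ 2
          ≤ ∑ u ∈ U, (2*(N:ℝ)/m) * a u ^ 2 := by
            refine Finset.sum_le_sum fun u hu => ?_
            exact mul_le_mul_of_nonneg_right (hcardV u hu) (sq_nonneg _)
        _ = (2*(N:ℝ)/m) * S0 := by
            rw [← Finset.mul_sum, hS0]
            congr 1
            exact Finset.sum_congr rfl fun u _ => hsq u
    have h4 : ∑ u ∈ U, ∑ v ∈ V u, a v ^ 2 ≤ (2*(N:ℝ)/m) * S0 := by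
      rw [hswap]
      have : ∀ v ∈ U, ∑ u ∈ V v, a v ^ 2 = ((V v).card : ℝ) * a v ^ 2 := by
        intro v _
        rw [Finset.sum_const, nsmul_eq_mul]
      rw [Finset.sum_congr rfl this]
      calc ∑ v ∈ U, ((V v).card : ℝ) * a v ^ 2
          ≤ ∑ v ∈ U, (2*(N:ℝ)/m) * a v ^ 2 := by
            refine Finset.sum_le_sum fun v hv => ?_
            exact mul_le_mul_of_nonneg_right (hcardV v hv) (sq_nonneg _)
        _ = (2*(N:ℝ)/m) * S0 := by
            rw [← Finset.mul_sum, hS0]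
            congr 1
            exact Finset.sum_congr rfl fun v _ => hsq v
    linarith
  have hS0nn : 0 ≤ S0 := Finset.sum_nonneg fun u _ => Complex.normSq_nonneg _
  have hCabs : ‖C‖ ≤ θ * m * S0 := by
    calc ‖C‖ ≤ ∑ u ∈ U, ‖∑ v ∈ U.erase u, f u v‖ :=
          norm_sum_le _ _
      _ ≤ ∑ u ∈ U, ∑ v ∈ U.erase u, ‖f u v‖ :=
          Finset.sum_le_sum fun u _ => norm_sum_le _ _
      _ ≤ ∑ u ∈ U, ∑ v ∈ U.erase u,
            (if (m:ℤ) ∣ v - u then (θ*m/(2*N)) * m * (a u * a v) else 0) :=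
          Finset.sum_le_sum fun u hu => Finset.sum_le_sum fun v hv => habsf u hu v hv
      _ = ∑ u ∈ U, ∑ v ∈ V u, (θ*m/(2*N)) * m * (a u * a v) := by
          refine Finset.sum_congr rfl fun u _ => ?_
          rw [hV, Finset.sum_filter]
      _ = ((θ*m/(2*N)) * m) * ∑ u ∈ U, ∑ v ∈ V u, a u * a v := by
          rw [Finset.mul_sum]
          exact Finset.sum_congr rfl fun u _ => by rw [Finset.mul_sum]
      _ ≤ ((θ*m/(2*N)) * m) * ((2*(N:ℝ)/m) * S0) := by
          refine mul_le_mul_of_nonneg_left hT (by positivity)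
      _ = θ * m * S0 := by field_simp
  have hEcross : |((N:ℝ)/m) * C.re| ≤ θ * P := by
    rw [abs_mul, abs_of_nonneg (by positivity : (0:ℝ) ≤ (N:ℝ)/m)]
    calc ((N:ℝ)/m) * |C.re| ≤ ((N:ℝ)/m) * ‖C‖ := by
          refine mul_le_mul_of_nonneg_left (Complex.abs_re_le_norm C) (by positivity)
      _ ≤ ((N:ℝ)/m) * (θ * m * S0) := mul_le_mul_of_nonneg_left hCabs (by positivity)
      _ = θ * ((N:ℝ) * S0) := by field_simp
      _ = θ * P := by rw [hparseval]
  -- final assembly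
  have hw0 : 0 ≤ norm2 w := Real.sqrt_nonneg _
  have hg0 : 0 ≤ norm2 g := Real.sqrt_nonneg _
  have hPb1 : α^2 * norm2 w^2 ≤ P := by
    rw [hPval]
    have h1 := (hΨ w).1
    nlinarith [h1, mul_nonneg hα.le hw0]
  have hPb2 : P ≤ β^2 * norm2 w^2 := by
    rw [hPval]
    have h1 := (hΨ w).2
    nlinarith [h1, hg0]
  have hP0 : 0 ≤ P := by rw [hPval]; positivity
  have hW0 : 0 ≤ norm2 w ^ 2 := sq_nonneg _
  constructor
  · by_cases h1 : θ ≤ 1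
    · rw [Eval]
      have h2 := (abs_le.mp hEcross).1
      nlinarith [hPb1]
    · have hE0 : (0:ℝ) ≤ ∫ ω, norm2 ((((Real.sqrt N : ℂ) / (Real.sqrt m : ℂ)) •
          (dirS N m (samplePts m Δ ω) * Ψ)).mulVec w) ^ 2 ∂μ :=
        integral_nonneg fun ω => sq_nonneg _
      nlinarith [hE0, mul_nonneg (sq_nonneg α) hW0]
  · rw [Eval]
    have h2 := (abs_le.mp hEcross).2
    nlinarith [hPb2]
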